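/- arXiv:quant-ph/9901029 — 2 statements merged into one kernel-verified Lean document; each statement's English description precedes it below -/
import Mathlib

section
/- Let n ≥ 2 be an integer and G = S_n ≀ S_2. The subgroup G′ of G generated by the involutive swaps has index 2 in G. -/
open scoped Classical

@[ext] structure Wr (n : ℕ) where
  fst : Equiv.Perm (Fin n)
  snd : Equiv.Perm (Fin n)
  bit : ZMod 2
  deriving DecidableEq, Fintype

namespace Wr

variable {n : ℕ}

protected def mul (x y : Wr n) : Wr n :=
  ⟨if x.bit = 0 then x.fst * y.fst else x.fst * y.snd,
   if x.bit = 0 then x.snd * y.snd else x.snd * y.fst,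
   x.bit + y.bit⟩

protected def inv (x : Wr n) : Wr n :=
  ⟨if x.bit = 0 then x.fst⁻¹ else x.snd⁻¹,
   if x.bit = 0 then x.snd⁻¹ else x.fst⁻¹,
   x.bit⟩

instance : Group (Wr n) where
  mul := Wr.mul
  one := ⟨1, 1, 0⟩
  inv := Wr.inv
  mul_assoc x y z := by
    show Wr.mul (Wr.mul x y) z = Wr.mul x (Wr.mul y z)
    obtain ⟨a, b, c⟩ := x; obtain ⟨d, e, f⟩ := y; obtain ⟨g, h, i⟩ := z
    rcases (by decide : ∀ j : ZMod 2, j = 0 ∨ j = 1) c with rfl | rfl <;> rcases (by decide : ∀ j : ZMod 2, j = 0 ∨ j = 1) f with rfl | rfl <;>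
      simp [Wr.mul, mul_assoc, show (1 : ZMod 2) ≠ 0 by decide,
        show (1 + 1 : ZMod 2) = 0 by decide, show ∀ j : ZMod 2, 1 + (1 + j) = j by decide]
  one_mul x := by
    show Wr.mul ⟨1, 1, 0⟩ x = x
    simp [Wr.mul]
  mul_one x := by
    show Wr.mul x ⟨1, 1, 0⟩ = x
    obtain ⟨a, b, c⟩ := x
    rcases (by decide : ∀ j : ZMod 2, j = 0 ∨ j = 1) c with rfl | rfl <;> simp [Wr.mul]
  inv_mul_cancel x := by
    show Wr.mul (Wr.inv x) x = ⟨1, 1, 0⟩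
    obtain ⟨a, b, c⟩ := x
    rcases (by decide : ∀ j : ZMod 2, j = 0 ∨ j = 1) c with rfl | rfl <;> simp [Wr.mul, Wr.inv, show (1 : ZMod 2) ≠ 0 by decide,
      show (1 + 1 : ZMod 2) = 0 by decide]

/-- An involutive swap: an element of the form `(g, g⁻¹, 1)`. -/
def IsSwap (k : Wr n) : Prop := ∃ g : Equiv.Perm (Fin n), k = ⟨g, g⁻¹, 1⟩

/-- The faithful action of `S_n ≀ S_2` on `Fin n ⊕ Fin n`:
`ι(σ,τ,0)` maps `inl i ↦ inl (σ i)`, `inr i ↦ inr (τ i)`, while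
`ι(σ,τ,1)` maps `inl i ↦ inr (τ i)`, `inr i ↦ inl (σ i)`. -/
def iota : Wr n →* Equiv.Perm (Fin n ⊕ Fin n) where
  toFun x := Equiv.sumCongr x.fst x.snd *
    (if x.bit = 0 then 1 else Equiv.sumComm (Fin n) (Fin n))
  map_one' := by
    simp [show ((1 : Wr n)).bit = 0 from rfl, show ((1 : Wr n)).fst = 1 from rfl,
      show ((1 : Wr n)).snd = 1 from rfl]
  map_mul' x y := by
    have hxy : x * y = Wr.mul x y := rfl
    obtain ⟨a, b, c⟩ := x; obtain ⟨d, e, f⟩ := y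
    rw [hxy]
    rcases (by decide : ∀ j : ZMod 2, j = 0 ∨ j = 1) c with rfl | rfl <;> rcases (by decide : ∀ j : ZMod 2, j = 0 ∨ j = 1) f with rfl | rfl <;>
      · ext u
        rcases u with u | u <;>
          simp [Wr.mul, show (1 : ZMod 2) ≠ 0 by decide,
            show (1 + 1 : ZMod 2) = 0 by decide, Equiv.Perm.mul_apply]

end Wr

/-- The Hilbert space `ℂ[G^m]`. -/
abbrev GIHilb (n m : ℕ) : Type := EuclideanSpace ℂ (Fin m → Wr n)

noncomputable section

namespace Wr

/-- The `k`-vector associated to `c ∈ G^m`: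
`x ↦ 2^{-m/2} ∏_i [x i ∈ {c i, c i * k}]`. -/
def kvec (n m : ℕ) (k : Wr n) (c : Fin m → Wr n) : GIHilb n m :=
  (WithLp.equiv 2 _).symm fun x =>
    ((Real.sqrt (2 ^ m) : ℝ)⁻¹ : ℂ) *
      ∏ i, (if x i = c i ∨ x i = c i * k then (1 : ℂ) else 0)

/-- `ℋ(k)`: the span of all `k`-vectors. -/
def kSpace (n m : ℕ) (k : Wr n) : Submodule ℂ (GIHilb n m) :=
  Submodule.span ℂ (Set.range (kvec n m k))

/-- `ℋ₁ = ∑_k ℋ(k)`, the sum over all involutive swaps `k`. -/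
def H1 (n m : ℕ) : Submodule ℂ (GIHilb n m) :=
  ⨆ k ∈ {k : Wr n | IsSwap k}, kSpace n m k

/-- The tensor product of coset states of the subgroup `H` with coset representatives `c`:
`x ↦ |H|^{-m/2} ∏_i [x i ∈ c i H]`. -/
def cosetState {n : ℕ} (H : Subgroup (Wr n)) (m : ℕ) (c : Fin m → Wr n) : GIHilb n m :=
  (WithLp.equiv 2 _).symm fun x =>
    ((Real.sqrt ((Nat.card H : ℝ) ^ m))⁻¹ : ℂ) *
      ∏ i, (if (c i)⁻¹ * x i ∈ H then (1 : ℂ) else 0)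

end Wr

/-- The subgroup of `S_n ≀ S_2` of elements acting (via `ι`) as automorphisms of the graph `Γ`. -/
def autSubgroup {n : ℕ} (Γ : SimpleGraph (Fin n ⊕ Fin n)) : Subgroup (Wr n) where
  carrier := {h | ∀ u v, Γ.Adj (Wr.iota h u) (Wr.iota h v) ↔ Γ.Adj u v}
  one_mem' := by intro u v; simp
  mul_mem' := by
    intro a b ha hb u v
    rw [map_mul, Equiv.Perm.mul_apply, Equiv.Perm.mul_apply, ha, hb]
  inv_mem' := by
    intro a ha u v
    have := ha ((Wr.iota a)⁻¹ u) ((Wr.iota a)⁻¹ v)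
    simpa [map_inv] using this.symm

end


namespace SwapsProof

variable {n : ℕ}

lemma mk_mul (a b d e : Equiv.Perm (Fin n)) (c f : ZMod 2) :
    (⟨a, b, c⟩ : Wr n) * ⟨d, e, f⟩ =
      ⟨if c = 0 then a * d else a * e, if c = 0 then b * e else b * d, c + f⟩ := rfl

lemma mk_inv (a b : Equiv.Perm (Fin n)) (c : ZMod 2) :
    (⟨a, b, c⟩ : Wr n)⁻¹ =
      ⟨if c = 0 then a⁻¹ else b⁻¹, if c = 0 then b⁻¹ else a⁻¹, c⟩ := rfl

/-- The sign homomorphism `(σ,τ,b) ↦ sgn σ · sgn τ`. -/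
def sgn : Wr n →* ℤˣ where
  toFun x := Equiv.Perm.sign x.fst * Equiv.Perm.sign x.snd
  map_one' := by
    show Equiv.Perm.sign (1 : Equiv.Perm (Fin n)) * Equiv.Perm.sign 1 = 1
    simp
  map_mul' x y := by
    obtain ⟨a, b, c⟩ := x; obtain ⟨d, e, f⟩ := y
    by_cases hc : c = 0 <;>
      · simp only [mk_mul, hc, if_true, if_false, map_mul]
        first
        | exact mul_mul_mul_comm _ _ _ _
        | rw [mul_mul_mul_comm, mul_comm (Equiv.Perm.sign e)]

/-- `G'`, the subgroup generated by the involutive swaps. -/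
def Cgrp (n : ℕ) : Subgroup (Wr n) := Subgroup.closure {k : Wr n | Wr.IsSwap k}

lemma swap_mem (g : Equiv.Perm (Fin n)) : (⟨g, g⁻¹, 1⟩ : Wr n) ∈ Cgrp n :=
  Subgroup.subset_closure ⟨g, rfl⟩

lemma pair_mem (g : Equiv.Perm (Fin n)) : (⟨g, g⁻¹, 0⟩ : Wr n) ∈ Cgrp n := by
  have h1 : (⟨(1 : Equiv.Perm (Fin n)), 1⁻¹, 1⟩ : Wr n) ∈ Cgrp n := swap_mem 1
  have := (Cgrp n).mul_mem (swap_mem g) h1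
  rw [mk_mul] at this
  simpa [show (1 + 1 : ZMod 2) = 0 by decide] using this

lemma M_mem (g h : Equiv.Perm (Fin n)) : (⟨g * h⁻¹, g⁻¹ * h, 0⟩ : Wr n) ∈ Cgrp n := by
  have h2 : (⟨h⁻¹, h, 0⟩ : Wr n) ∈ Cgrp n := by simpa using pair_mem h⁻¹
  have := (Cgrp n).mul_mem (pair_mem g) h2
  rw [mk_mul] at this
  simpa using this

lemma conj_mem (a g : Equiv.Perm (Fin n)) : (⟨a, g⁻¹ * a⁻¹ * g, 0⟩ : Wr n) ∈ Cgrp n := by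
  have := M_mem g (a⁻¹ * g)
  simpa [mul_assoc] using this

lemma snd_mem (a g : Equiv.Perm (Fin n)) :
    (⟨1, a * (g⁻¹ * a⁻¹ * g), 0⟩ : Wr n) ∈ Cgrp n := by
  have h1 : (⟨a⁻¹, a, 0⟩ : Wr n) ∈ Cgrp n := by simpa using pair_mem a⁻¹
  have := (Cgrp n).mul_mem h1 (conj_mem a g)
  rw [mk_mul] at this
  simpa using this

/-- The subgroup `S = {π | (1, π, 0) ∈ G'}` of `S_n`. -/
def S (n : ℕ) : Subgroup (Equiv.Perm (Fin n)) where
  carrier := {π | (⟨1, π, 0⟩ : Wr n) ∈ Cgrp n}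
  one_mem' := by
    have : ((1 : Wr n)) ∈ Cgrp n := (Cgrp n).one_mem
    simpa [show (1 : Wr n) = ⟨1, 1, 0⟩ from rfl] using this
  mul_mem' := by
    intro a b ha hb
    have := (Cgrp n).mul_mem ha hb
    rw [mk_mul] at this
    simpa using this
  inv_mem' := by
    intro a ha
    have := (Cgrp n).inv_mem ha
    rw [mk_inv] at this
    simpa using this

lemma swap_mul_swap_mem_S {x y z w : Fin n} (hxy : x ≠ y) (hzw : z ≠ w) :
    Equiv.swap x y * Equiv.swap z w ∈ S n := by
  obtain ⟨c, hc⟩ := isConj_iff.mp (Equiv.Perm.isConj_swap hxy hzw)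
  have h := snd_mem (Equiv.swap x y) c⁻¹
  have e : (c⁻¹)⁻¹ * (Equiv.swap x y)⁻¹ * c⁻¹ = Equiv.swap z w := by
    rw [inv_inv, Equiv.swap_inv]; exact hc
  rw [e] at h
  exact h

lemma even_mem_S (hn : 2 ≤ n) (π : Equiv.Perm (Fin n)) (hπ : Equiv.Perm.sign π = 1) :
    π ∈ S n := by
  have h01 : (⟨0, by omega⟩ : Fin n) ≠ ⟨1, by omega⟩ := by
    simp [Fin.ext_iff]
  set t : Equiv.Perm (Fin n) := Equiv.swap ⟨0, by omega⟩ ⟨1, by omega⟩ with ht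
  have key : ∀ f : Equiv.Perm (Fin n),
      (Equiv.Perm.sign f = 1 → f ∈ S n) ∧ (Equiv.Perm.sign f = -1 → t * f ∈ S n) := by
    intro f
    refine Equiv.Perm.swap_induction_on f ⟨fun _ => (S n).one_mem, fun h => by simp at h⟩ ?_
    intro f x y hxy ih
    have hs : Equiv.Perm.sign (Equiv.swap x y * f) = -Equiv.Perm.sign f := by
      simp [Equiv.Perm.sign_swap hxy]
    have ht2 : t * t = 1 := Equiv.swap_mul_self _ _
    constructor
    · intro h1
      have hf : Equiv.Perm.sign f = -1 := by
        rw [hs, neg_eq_iff_eq_neg] at h1; exact h1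
      have h2 := ih.2 hf
      have h3 : Equiv.swap x y * t ∈ S n := swap_mul_swap_mem_S hxy h01
      have hmem := (S n).mul_mem h3 h2
      have heq : Equiv.swap x y * f = Equiv.swap x y * t * (t * f) := by
        rw [mul_assoc, ← mul_assoc t, ht2, one_mul]
      rw [heq]; exact hmem
    · intro h1
      have hf : Equiv.Perm.sign f = 1 := by
        rw [hs, neg_eq_iff_eq_neg] at h1
        simpa using h1
      have h2 := ih.1 hf
      have h3 : t * Equiv.swap x y ∈ S n := swap_mul_swap_mem_S h01 hxy
      have := (S n).mul_mem h3 h2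
      rwa [mul_assoc] at this
  exact (key π).1 hπ

lemma closure_eq_ker (hn : 2 ≤ n) : Cgrp n = MonoidHom.ker (sgn (n := n)) := by
  apply le_antisymm
  · rw [Cgrp, Subgroup.closure_le]
    rintro k ⟨g, rfl⟩
    show Equiv.Perm.sign g * Equiv.Perm.sign g⁻¹ = 1
    simp
  · intro x hx
    obtain ⟨σ, τ, b⟩ := x
    have hx' : Equiv.Perm.sign σ * Equiv.Perm.sign τ = 1 := hx
    -- reduce to bit 0
    have key0 : ∀ σ τ : Equiv.Perm (Fin n), Equiv.Perm.sign σ * Equiv.Perm.sign τ = 1 →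
        (⟨σ, τ, 0⟩ : Wr n) ∈ Cgrp n := by
      intro σ τ h
      have h1 : Equiv.Perm.sign (σ * τ) = 1 := by rw [map_mul, h]
      have h2 : (⟨1, σ * τ, 0⟩ : Wr n) ∈ Cgrp n := even_mem_S hn _ h1
      have h3 := (Cgrp n).mul_mem (pair_mem σ) h2
      rw [mk_mul] at h3
      simpa [mul_assoc] using h3
    by_cases hb : b = 0
    · subst hb; exact key0 σ τ hx'
    · have hb1 : b = 1 := by
        fin_cases b
        · exact absurd rfl hb
        · rfl
      subst hb1
      have h2 := (Cgrp n).mul_mem (key0 σ τ hx') (swap_mem 1)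
      rw [mk_mul] at h2
      simpa using h2

theorem index_eq_two (hn : 2 ≤ n) : (Cgrp n).index = 2 := by
  rw [closure_eq_ker hn, Subgroup.index_ker]
  have hsurj : Function.Surjective (sgn (n := n)) := by
    intro u
    rcases Int.units_eq_one_or u with rfl | rfl
    · exact ⟨1, map_one _⟩
    · refine ⟨⟨Equiv.swap ⟨0, by omega⟩ ⟨1, by omega⟩, 1, 0⟩, ?_⟩
      show Equiv.Perm.sign _ * Equiv.Perm.sign (1 : Equiv.Perm (Fin n)) = -1
      rw [Equiv.Perm.sign_swap (by simp [Fin.ext_iff]), map_one, mul_one]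
  rw [MonoidHom.range_eq_top_of_surjective _ hsurj]
  have : Nat.card (⊤ : Subgroup ℤˣ) = Nat.card ℤˣ := Nat.card_congr Subgroup.topEquiv.toEquiv
  rw [this]
  simp [Nat.card_eq_fintype_card]

end SwapsProof

/-- For `n ≥ 2`, the subgroup of `G = S_n ≀ S_2` generated by the involutive swaps has
index `2` in `G`. -/
theorem closure_swaps_index_eq_two
    (n : ℕ) (hn : 2 ≤ n) :
    (Subgroup.closure {k : Wr n | Wr.IsSwap k}).index = 2 := by
  exact SwapsProof.index_eq_two hn
end

section
/- Let n and m be positive integers, G = S_n ≀ S_2, H a subgroup of G, and k ∈ H an involutive swap belonging to H. Then for every c ∈ G^m, the tensor product of coset states ψ_c lies in the subspace ℋ(k) spanned by the k-vectors. -/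
open scoped Classical

lemma GIHilb.sum_apply {n m : ℕ} {ι : Type*} (s : Finset ι) (f : ι → GIHilb n m)
    (x : Fin m → Wr n) : (∑ i ∈ s, f i) x = ∑ i ∈ s, f i x := by
  induction s using Finset.cons_induction with
  | empty => simp
  | cons a s ha ih => rw [Finset.sum_cons, Finset.sum_cons, PiLp.add_apply, ih]

/-- If `k` is an involutive swap belonging to the subgroup `H`, then every tensor product of
coset states `ψ_c` lies in the subspace `ℋ(k)` spanned by the `k`-vectors. -/
theorem cosetState_mem_kSpace
    (n m : ℕ) (hn : 0 < n) (hm : 0 < m)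
    (H : Subgroup (Wr n)) (k : Wr n) (hkH : k ∈ H) (hk : Wr.IsSwap k)
    (c : Fin m → Wr n) :
    Wr.cosetState H m c ∈ Wr.kSpace n m k := by
  classical
  -- basic facts about the swap k
  have hk2 : k * k = 1 := by
    obtain ⟨g, rfl⟩ := hk
    show Wr.mul ⟨g, g⁻¹, 1⟩ ⟨g, g⁻¹, 1⟩ = (⟨1, 1, 0⟩ : Wr n)
    simp [Wr.mul, show (1 : ZMod 2) ≠ 0 by decide, show (1 + 1 : ZMod 2) = 0 by decide]
  have hk1 : k ≠ 1 := by
    obtain ⟨g, rfl⟩ := hk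
    intro h
    have : (⟨g, g⁻¹, 1⟩ : Wr n).bit = (⟨1, 1, 0⟩ : Wr n).bit := by rw [h]; rfl
    simpa using this
  have hkinv : k⁻¹ = k := by
    have := hk2
    calc k⁻¹ = k⁻¹ * (k * k) := by rw [hk2, mul_one]
    _ = k := by group
  -- the per-coordinate identity
  have factor : ∀ ci xi : Wr n,
      (∑ y : Wr n, (if ci⁻¹ * y ∈ H then (1 : ℂ) else 0) *
        (if xi = y ∨ xi = y * k then (1 : ℂ) else 0))
        = 2 * (if ci⁻¹ * xi ∈ H then (1 : ℂ) else 0) := by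
    intro ci xi
    have hne : xi ≠ xi * k := by
      intro h
      nth_rewrite 1 [← mul_one xi] at h
      exact hk1 (mul_left_cancel h).symm
    have hmemk : ci⁻¹ * (xi * k) ∈ H ↔ ci⁻¹ * xi ∈ H := by
      constructor
      · intro h
        have := H.mul_mem h (H.inv_mem hkH)
        simpa [mul_assoc, hkinv, hk2] using this
      · intro h
        have := H.mul_mem h hkH
        simpa [mul_assoc] using this
    have hcond : ∀ y : Wr n, (xi = y ∨ xi = y * k) ↔ y ∈ ({xi, xi * k} : Finset (Wr n)) := by
      intro y
      simp only [Finset.mem_insert, Finset.mem_singleton]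
      constructor
      · rintro (rfl | h)
        · exact Or.inl rfl
        · right
          rw [h, mul_assoc, hk2, mul_one]
      · rintro (rfl | rfl)
        · exact Or.inl rfl
        · right
          rw [mul_assoc, hk2, mul_one]
    calc (∑ y : Wr n, (if ci⁻¹ * y ∈ H then (1 : ℂ) else 0) *
          (if xi = y ∨ xi = y * k then (1 : ℂ) else 0))
        = ∑ y : Wr n, (if y ∈ ({xi, xi * k} : Finset (Wr n)) then
            (if ci⁻¹ * y ∈ H then (1 : ℂ) else 0) else 0) := by
          refine Finset.sum_congr rfl fun y _ => ?_
          rw [mul_comm]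
          simp only [hcond y, ite_mul, one_mul, zero_mul]
      _ = ∑ y ∈ ({xi, xi * k} : Finset (Wr n)), (if ci⁻¹ * y ∈ H then (1 : ℂ) else 0) := by
          rw [Finset.sum_ite_mem, Finset.univ_inter]
      _ = (if ci⁻¹ * xi ∈ H then (1 : ℂ) else 0) +
            (if ci⁻¹ * (xi * k) ∈ H then (1 : ℂ) else 0) := Finset.sum_pair hne
      _ = 2 * (if ci⁻¹ * xi ∈ H then (1 : ℂ) else 0) := by
          rw [if_congr hmemk rfl rfl]; ring
  -- expressing the coset state as a linear combination of k-vectors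
  have key : Wr.cosetState H m c =
      (((Real.sqrt ((Nat.card H : ℝ) ^ m))⁻¹ * ((2 : ℝ) ^ m)⁻¹ * Real.sqrt (2 ^ m) : ℝ) : ℂ) •
        ∑ d : Fin m → Wr n,
          (if ∀ i, (c i)⁻¹ * d i ∈ H then (1 : ℂ) else 0) • Wr.kvec n m k d := by
    ext x
    have hsum : (((((Real.sqrt ((Nat.card H : ℝ) ^ m))⁻¹ * ((2 : ℝ) ^ m)⁻¹ *
        Real.sqrt (2 ^ m) : ℝ) : ℂ) • ∑ d : Fin m → Wr n,
          (if ∀ i, (c i)⁻¹ * d i ∈ H then (1 : ℂ) else 0) • Wr.kvec n m k d) x)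
        = (((Real.sqrt ((Nat.card H : ℝ) ^ m))⁻¹ * ((2 : ℝ) ^ m)⁻¹ *
            Real.sqrt (2 ^ m) : ℝ) : ℂ) * ∑ d : Fin m → Wr n,
          (if ∀ i, (c i)⁻¹ * d i ∈ H then (1 : ℂ) else 0) * Wr.kvec n m k d x := by
      rw [PiLp.smul_apply, smul_eq_mul]
      congr 1
      rw [GIHilb.sum_apply]
      exact Finset.sum_congr rfl fun d _ => by rw [PiLp.smul_apply, smul_eq_mul]
    rw [hsum]
    simp only [Wr.cosetState, Wr.kvec, WithLp.equiv_symm_apply, WithLp.ofLp_toLp]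
    have expand : ∀ d : Fin m → Wr n,
        (if ∀ i, (c i)⁻¹ * d i ∈ H then (1 : ℂ) else 0) *
          (((Real.sqrt (2 ^ m) : ℝ)⁻¹ : ℂ) *
            ∏ i, (if x i = d i ∨ x i = d i * k then (1 : ℂ) else 0))
        = ((Real.sqrt (2 ^ m) : ℝ)⁻¹ : ℂ) *
            ∏ i, ((if (c i)⁻¹ * d i ∈ H then (1 : ℂ) else 0) *
              (if x i = d i ∨ x i = d i * k then (1 : ℂ) else 0)) := by
      intro d
      simp only [Finset.prod_mul_distrib, Finset.prod_boole, Finset.mem_univ, true_implies]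
      ring
    rw [Finset.sum_congr rfl fun d _ => expand d, ← Finset.mul_sum,
      ← Fintype.prod_sum fun i y => (if (c i)⁻¹ * y ∈ H then (1 : ℂ) else 0) *
        (if x i = y ∨ x i = y * k then (1 : ℂ) else 0)]
    rw [Finset.prod_congr rfl fun i _ => factor (c i) (x i), Finset.prod_mul_distrib]
    rw [Finset.prod_const]
    have h2 : Real.sqrt (2 ^ m) ≠ 0 := by positivity
    have h2' : ((Real.sqrt (2 ^ m) : ℝ) : ℂ) ≠ 0 := by exact_mod_cast h2
    push_cast
    rw [Finset.card_univ, Fintype.card_fin]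
    have h3 : ((2 : ℂ) ^ m) ≠ 0 := pow_ne_zero _ two_ne_zero
    have aux : ∀ a s t p : ℂ, s ≠ 0 → t ≠ 0 →
        a⁻¹ * t⁻¹ * s * (s⁻¹ * (t * p)) = a⁻¹ * p := by
      intro a s t p hs ht
      calc a⁻¹ * t⁻¹ * s * (s⁻¹ * (t * p))
          = a⁻¹ * ((t⁻¹ * t) * ((s * s⁻¹) * p)) := by ring
        _ = a⁻¹ * p := by rw [inv_mul_cancel₀ ht, mul_inv_cancel₀ hs, one_mul, one_mul]
    exact (aux _ _ _ _ h2' h3).symm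
  rw [key]
  refine Submodule.smul_mem _ _ (Submodule.sum_mem _ fun d _ => Submodule.smul_mem _ _ ?_)
  exact Submodule.subset_span ⟨d, rfl⟩
end
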